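/- arXiv:2504.00702 — 2 statements merged into one kernel-verified Lean document; each statement's English description precedes it below -/
import Mathlib

section
/- Let ψ ∈ L¹(ℝ²) ∩ L²(ℝ²) and suppose the Fourier transform satisfies ∑_{θ ∈ SO(2,N)} ψ̂(R_θ⁻¹ ω) = 1 for all ω ∈ B(0, ρ₀) (fast reconstruction). Then for every f ∈ L²(ℝ²) with supp f̂ ⊂ B(0,ρ₀), one has f = ∑_{θ ∈ SO(2,N)} W_ψ f(·, θ), where W_ψ f(x,θ) = ∫_{ℝ²} conj(ψ(R_θ⁻¹(y-x))) f(y) dy. -/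
open Real MeasureTheory
open scoped FourierTransform

noncomputable section

/-- The Euclidean plane. -/
abbrev E2 := EuclideanSpace ℝ (Fin 2)

/-- Counter-clockwise rotation of the plane by angle `θ`. -/
def rotE (θ : ℝ) (v : E2) : E2 :=
  (WithLp.equiv 2 (Fin 2 → ℝ)).symm
    ![Real.cos θ * v 0 - Real.sin θ * v 1, Real.sin θ * v 0 + Real.cos θ * v 1]

open scoped ComplexConjugate

namespace FastReconAux

lemma rotE_zero (θ : ℝ) (v : E2) : rotE θ v 0 = Real.cos θ * v 0 - Real.sin θ * v 1 := rfl
lemma rotE_one (θ : ℝ) (v : E2) : rotE θ v 1 = Real.sin θ * v 0 + Real.cos θ * v 1 := rfl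

lemma E2_ext {v w : E2} (h0 : v 0 = w 0) (h1 : v 1 = w 1) : v = w := by
  ext i
  fin_cases i <;> assumption

/-- Rotation as a linear isometry equivalence. -/
def rotLIE (θ : ℝ) : E2 ≃ₗᵢ[ℝ] E2 where
  toFun := rotE θ
  invFun := rotE (-θ)
  map_add' v w := by
    refine E2_ext ?_ ?_ <;>
      simp only [rotE_zero, rotE_one, PiLp.add_apply] <;> ring
  map_smul' c v := by
    refine E2_ext ?_ ?_ <;>
      simp only [rotE_zero, rotE_one, PiLp.smul_apply, smul_eq_mul, RingHom.id_apply] <;> ring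
  left_inv v := by
    refine E2_ext ?_ ?_ <;>
      simp only [rotE_zero, rotE_one, Real.cos_neg, Real.sin_neg]
    · linear_combination v 0 * Real.sin_sq_add_cos_sq θ
    · linear_combination v 1 * Real.sin_sq_add_cos_sq θ
  right_inv v := by
    refine E2_ext ?_ ?_ <;>
      simp only [rotE_zero, rotE_one, Real.cos_neg, Real.sin_neg]
    · linear_combination v 0 * Real.sin_sq_add_cos_sq θ
    · linear_combination v 1 * Real.sin_sq_add_cos_sq θ
  norm_map' v := by
    change ‖rotE θ v‖ = ‖v‖
    rw [EuclideanSpace.norm_eq, EuclideanSpace.norm_eq]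
    congr 1
    simp only [Fin.sum_univ_two, rotE_zero, rotE_one, Real.norm_eq_abs, sq_abs]
    linear_combination (v 0 ^ 2 + v 1 ^ 2) * Real.sin_sq_add_cos_sq θ

lemma rotLIE_apply (θ : ℝ) (v : E2) : rotLIE θ v = rotE θ v := rfl
lemma rotLIE_symm_apply (θ : ℝ) (v : E2) : (rotLIE θ).symm v = rotE (-θ) v := rfl

lemma inner_rotE (θ : ℝ) (v w : E2) :
    (inner ℝ (rotE θ v) w : ℝ) = inner ℝ v (rotE (-θ) w) := by
  simp only [PiLp.inner_apply, RCLike.inner_apply, conj_trivial, Fin.sum_univ_two,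
    rotE_zero, rotE_one, Real.cos_neg, Real.sin_neg]
  ring

lemma circle_smul (x : Circle) (z : ℂ) : x • z = (x : ℂ) * z := rfl

lemma continuous_circle_coe : Continuous (fun x : Circle => (x : ℂ)) := continuous_subtype_val

lemma norm_circle_coe (x : Circle) : ‖(x : ℂ)‖ = 1 := by
  exact Circle.norm_coe x

lemma conj_fourierChar (s : ℝ) : conj ((𝐞 s : Circle) : ℂ) = ((𝐞 (-s) : Circle) : ℂ) := by
  rw [Real.fourierChar_apply, Real.fourierChar_apply, ← Complex.exp_conj]
  congr 1
  simp only [map_mul, Complex.conj_ofReal, Complex.conj_I]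
  push_cast
  ring

/-- Fourier transform of `z ↦ conj (ψ (R_θ (-z)))`. -/
lemma fourier_comp_rot (ψ : E2 → ℂ) (θ : ℝ) (ξ : E2) :
    𝓕 (fun z : E2 => conj (ψ (rotE θ (-z)))) ξ = conj (𝓕 ψ (rotE θ ξ)) := by
  have hAmp : MeasurePreserving (fun u : E2 => -(rotE (-θ) u)) volume volume := by
    have := ((rotLIE θ).symm.trans (LinearIsometryEquiv.neg ℝ (E := E2))).measurePreserving
    exact this
  have hAme : MeasurableEmbedding (fun u : E2 => -(rotE (-θ) u)) := by
    have := ((rotLIE θ).symm.trans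
        (LinearIsometryEquiv.neg ℝ (E := E2))).toMeasurableEquiv.measurableEmbedding
    exact this
  have key := hAmp.integral_comp hAme
      (fun v : E2 => 𝐞 (-(inner ℝ v ξ : ℝ)) • conj (ψ (rotE θ (-v))))
  rw [Real.fourier_eq, ← key]
  have step : ∀ u : E2,
      𝐞 (-(inner ℝ (-(rotE (-θ) u)) ξ : ℝ)) • conj (ψ (rotE θ (-(-(rotE (-θ) u)))))
        = conj (𝐞 (-(inner ℝ u (rotE θ ξ) : ℝ)) • ψ u) := by
    intro u
    have h1 : rotE θ (-(-(rotE (-θ) u))) = u := by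
      rw [neg_neg, ← rotLIE_apply, ← rotLIE_symm_apply]
      exact (rotLIE θ).apply_symm_apply u
    have h2 : (inner ℝ (-(rotE (-θ) u)) ξ : ℝ) = -(inner ℝ u (rotE θ ξ) : ℝ) := by
      rw [inner_neg_left, inner_rotE, neg_neg]
    rw [h1, h2, neg_neg, circle_smul, circle_smul, map_mul, conj_fourierChar, neg_neg]
  simp only [step]
  rw [integral_conj, ← Real.fourier_eq]

lemma conv_integrable {f g : E2 → ℂ} (hf : Integrable f) (hg : Integrable g) :
    Integrable (fun x : E2 => ∫ y : E2, f y * g (x - y)) := by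
  have := hf.integrable_convolution (ContinuousLinearMap.mul ℂ ℂ) hg
  refine this.congr (Filter.Eventually.of_forall fun x => ?_)
  simp [convolution_def]

/-- The convolution theorem for the Fourier transform on the plane. -/
lemma fourier_conv {f g : E2 → ℂ} (hf : Integrable f) (hg : Integrable g) (ξ : E2) :
    𝓕 (fun x : E2 => ∫ y : E2, f y * g (x - y)) ξ = 𝓕 f ξ * 𝓕 g ξ := by
  have base : Integrable (fun p : E2 × E2 => f p.2 * g (p.1 - p.2))
      ((volume : Measure E2).prod volume) := by
    have := hf.convolution_integrand (ContinuousLinearMap.mul ℂ ℂ) hg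
    simpa [ContinuousLinearMap.mul_apply'] using this
  have hi : Integrable
      (Function.uncurry fun x y : E2 => ((𝐞 (-(inner ℝ x ξ : ℝ)) : Circle) : ℂ) * (f y * g (x - y)))
      ((volume : Measure E2).prod volume) := by
    have hc : Continuous fun p : E2 × E2 => ((𝐞 (-(inner ℝ p.1 ξ : ℝ)) : Circle) : ℂ) := by
      apply continuous_circle_coe.comp
      exact Real.continuous_fourierChar.comp ((continuous_fst.inner continuous_const).neg)
    have := base.bdd_mul hc.aestronglyMeasurable (Filter.Eventually.of_forall fun p => le_of_eq (norm_circle_coe _))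
    exact this
  calc 𝓕 (fun x : E2 => ∫ y : E2, f y * g (x - y)) ξ
      = ∫ x : E2, ∫ y : E2, ((𝐞 (-(inner ℝ x ξ : ℝ)) : Circle) : ℂ) * (f y * g (x - y)) := by
        rw [Real.fourier_eq]
        congr 1
        funext x
        rw [circle_smul, ← integral_const_mul]
    _ = ∫ y : E2, ∫ x : E2, ((𝐞 (-(inner ℝ x ξ : ℝ)) : Circle) : ℂ) * (f y * g (x - y)) :=
        integral_integral_swap hi
    _ = ∫ y : E2, ((𝐞 (-(inner ℝ y ξ : ℝ)) : Circle) : ℂ) *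
          (f y * ∫ x : E2, ((𝐞 (-(inner ℝ x ξ : ℝ)) : Circle) : ℂ) * g x) := by
        congr 1
        funext y
        rw [← integral_add_right_eq_self
          (fun x => ((𝐞 (-(inner ℝ x ξ : ℝ)) : Circle) : ℂ) * (f y * g (x - y))) y]
        have : ∀ x : E2, ((𝐞 (-(inner ℝ (x + y) ξ : ℝ)) : Circle) : ℂ) * (f y * g (x + y - y))
            = (((𝐞 (-(inner ℝ y ξ : ℝ)) : Circle) : ℂ) * f y) *
              (((𝐞 (-(inner ℝ x ξ : ℝ)) : Circle) : ℂ) * g x) := by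
          intro x
          rw [inner_add_left,
            show -(inner ℝ x ξ + (inner ℝ y ξ : ℝ)) = -(inner ℝ x ξ : ℝ) + -(inner ℝ y ξ : ℝ) by ring,
            AddChar.map_add_eq_mul, Circle.coe_mul, add_sub_cancel_right]
          ring
        simp only [this]
        rw [integral_const_mul, mul_assoc]
    _ = (∫ y : E2, ((𝐞 (-(inner ℝ y ξ : ℝ)) : Circle) : ℂ) * f y) *
          (∫ x : E2, ((𝐞 (-(inner ℝ x ξ : ℝ)) : Circle) : ℂ) * g x) := by
        rw [← integral_mul_const]
        congr 1
        funext y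
        ring
    _ = 𝓕 f ξ * 𝓕 g ξ := by
        rw [Real.fourier_eq, Real.fourier_eq]
        simp only [circle_smul]

/-- A smooth compactly supported function as a Schwartz map. -/
def toSchwartz (g : E2 → ℂ) (h1 : ContDiff ℝ ((⊤ : ℕ∞) : WithTop ℕ∞) g)
    (h2 : HasCompactSupport g) : SchwartzMap E2 ℂ where
  toFun := g
  smooth' := h1
  decay' := by
    intro k n
    have hn : HasCompactSupport fun x : E2 => ‖iteratedFDeriv ℝ n g x‖ :=
      (h2.iteratedFDeriv n).norm
    have hcont : Continuous fun x : E2 => ‖x‖ ^ k * ‖iteratedFDeriv ℝ n g x‖ :=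
      (continuous_norm.pow k).mul
        (h1.continuous_iteratedFDeriv (by exact_mod_cast le_top)).norm
    have hsupp : HasCompactSupport fun x : E2 => ‖x‖ ^ k * ‖iteratedFDeriv ℝ n g x‖ :=
      hn.mul_left
    obtain ⟨C, hC⟩ := hcont.bounded_above_of_compact_support hsupp
    refine ⟨C, fun x => ?_⟩
    have := hC x
    rw [Real.norm_eq_abs] at this
    exact (le_abs_self _).trans this

lemma toSchwartz_apply (g : E2 → ℂ) (h1 h2) (x : E2) : toSchwartz g h1 h2 x = g x := rfl

lemma innerL_flip : (innerₗ E2).flip = innerₗ E2 := by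
  apply LinearMap.ext
  intro x
  apply LinearMap.ext
  intro y
  simp only [LinearMap.flip_apply, innerₗ_apply_apply]
  exact real_inner_comm x y

lemma integrable_conj {F : E2 → ℂ} (hF : Integrable F) :
    Integrable (fun z : E2 => (starRingEnd ℂ) (F z)) :=
  ⟨Complex.continuous_conj.comp_aestronglyMeasurable hF.1,
    by simpa [HasFiniteIntegral] using hF.2⟩

/-- The multiplication formula specialised to Schwartz test functions. -/
lemma mulform (F : E2 → ℂ) (hF : Integrable F) (h : SchwartzMap E2 ℂ) :
    ∫ x : E2, F x * 𝓕 (⇑h) x = ∫ ξ : E2, 𝓕 F ξ * h ξ := by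
  have hcont : Continuous fun p : E2 × E2 => (innerₗ E2) p.1 p.2 := continuous_inner
  have key := VectorFourier.integral_fourierIntegral_smul_eq_flip (L := innerₗ E2)
      (μ := (volume : Measure E2)) (ν := (volume : Measure E2))
      Real.continuous_fourierChar hcont hF h.integrable
  rw [innerL_flip] at key
  have e1 : (∫ ξ : E2, VectorFourier.fourierIntegral 𝐞 volume (innerₗ E2) F ξ • h ξ)
      = ∫ ξ : E2, 𝓕 F ξ * h ξ := by
    congr 1
  have e2 : (∫ x : E2, F x • VectorFourier.fourierIntegral 𝐞 volume (innerₗ E2) (⇑h) x)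
      = ∫ x : E2, F x * 𝓕 (⇑h) x := by
    congr 1
  rw [e1, e2] at key
  exact key.symm

end FastReconAux

open FastReconAux

/-- **Fast reconstruction by summing over orientations**: if
`∑_{θ ∈ SO(2,N)} conj(ψ̂(R_θ⁻¹ ω)) = 1` on `B(0,ρ₀)` then every disk-limited
`f ∈ L¹ ∩ L²` satisfies `f = ∑_{θ ∈ SO(2,N)} W_ψ f(·, θ)`, where
`W_ψ f(x,θ) = ∫ conj(ψ(R_θ⁻¹(y - x))) f(y) dy`. -/
theorem fast_reconstruction (N : ℕ) (hN : 1 ≤ N) (ρ₀ : ℝ) (hρ₀ : 0 < ρ₀)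
    (ψ : E2 → ℂ) (hψ1 : Integrable ψ) (hψ2 : MemLp ψ 2 volume)
    (hrec : ∀ ω ∈ Metric.ball (0 : E2) ρ₀,
      ∑ j ∈ Finset.range N, (starRingEnd ℂ) (𝓕 ψ (rotE (-(2 * π * j / N)) ω)) = 1)
    (f : E2 → ℂ) (hf1 : Integrable f) (hf2 : MemLp f 2 volume)
    (hsupp : Function.support (𝓕 f) ⊆ Metric.ball (0 : E2) ρ₀) :
    f =ᵐ[volume] fun x : E2 =>
      ∑ j ∈ Finset.range N,
        ∫ y : E2, (starRingEnd ℂ) (ψ (rotE (-(2 * π * j / N)) (y - x))) * f y := by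
  classical
  set α : ℕ → ℝ := fun j => -(2 * π * j / N) with hα
  set g : ℕ → E2 → ℂ := fun j z => (starRingEnd ℂ) (ψ (rotE (α j) (-z))) with hgdef
  -- integrability of the kernels
  have hg_int : ∀ j, Integrable (g j) := by
    intro j
    set A := (LinearIsometryEquiv.neg ℝ (E := E2)).trans (rotLIE (α j)) with hAdef
    have comp : Integrable (ψ ∘ ⇑A) :=
      (A.measurePreserving.integrable_comp_emb
        A.toMeasurableEquiv.measurableEmbedding).2 hψ1
    have comp' : Integrable (fun z : E2 => ψ (rotE (α j) (-z))) := by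
      exact comp
    exact integrable_conj comp'
  -- the orientation-score terms as convolutions
  have Wconv : ∀ (j : ℕ) (x : E2),
      (∫ y : E2, (starRingEnd ℂ) (ψ (rotE (α j) (y - x))) * f y)
        = ∫ y : E2, f y * g j (x - y) := by
    intro j x
    congr 1
    funext y
    rw [hgdef]
    simp only [neg_sub]
    ring
  set S : E2 → ℂ := fun x => ∑ j ∈ Finset.range N, ∫ y : E2, f y * g j (x - y) with hSdef
  have hS_int : Integrable S :=
    integrable_finset_sum _ (fun j _ => conv_integrable hf1 (hg_int j))
  -- Fourier data of f
  have h𝓕f_cont : Continuous (𝓕 f) :=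
    VectorFourier.fourierIntegral_continuous Real.continuous_fourierChar
      (continuous_inner) hf1
  have h𝓕f_supp : HasCompactSupport (𝓕 f) := by
    refine HasCompactSupport.intro (isCompact_closedBall (0 : E2) ρ₀) ?_
    intro x hx
    by_contra hne
    exact hx (Metric.ball_subset_closedBall (hsupp (Function.mem_support.2 hne)))
  have h𝓕f_int : Integrable (𝓕 f) :=
    h𝓕f_cont.integrable_of_hasCompactSupport h𝓕f_supp
  -- the Fourier transforms agree
  have h𝓕S : ∀ ξ : E2, 𝓕 S ξ = 𝓕 f ξ := by
    intro ξ
    have sum𝓕 : 𝓕 S ξ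
        = ∑ j ∈ Finset.range N, 𝓕 (fun x : E2 => ∫ y : E2, f y * g j (x - y)) ξ := by
      rw [Real.fourier_eq]
      rw [show (fun v : E2 => 𝐞 (-(inner ℝ v ξ : ℝ)) • S v)
          = fun v : E2 => ∑ j ∈ Finset.range N,
              𝐞 (-(inner ℝ v ξ : ℝ)) • (∫ y : E2, f y * g j (v - y)) from
        funext fun v => by rw [hSdef]; exact Finset.smul_sum]
      rw [integral_finset_sum]
      · exact Finset.sum_congr rfl fun j _ => by rw [← Real.fourier_eq]
      · intro j _
        exact (Real.fourierIntegral_convergent_iff ξ).2 (conv_integrable hf1 (hg_int j))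
    rw [sum𝓕]
    have each : ∀ j ∈ Finset.range N,
        𝓕 (fun x : E2 => ∫ y : E2, f y * g j (x - y)) ξ
          = 𝓕 f ξ * (starRingEnd ℂ) (𝓕 ψ (rotE (α j) ξ)) := by
      intro j _
      rw [fourier_conv hf1 (hg_int j)]
      congr 1
      rw [hgdef]
      exact fourier_comp_rot ψ (α j) ξ
    rw [Finset.sum_congr rfl each, ← Finset.mul_sum]
    by_cases hξ : ξ ∈ Metric.ball (0 : E2) ρ₀
    · rw [hrec ξ hξ, mul_one]
    · have hz : 𝓕 f ξ = 0 := by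
        by_contra hne
        exact hξ (hsupp (Function.mem_support.2 hne))
      rw [hz, zero_mul]
  -- conclude via test functions
  have main : f =ᵐ[volume] S := by
    refine ae_eq_of_integral_contDiff_smul_eq hf1.locallyIntegrable
      hS_int.locallyIntegrable ?_
    intro φ hφ hφc
    have hΦs : ContDiff ℝ ((⊤ : ℕ∞) : WithTop ℕ∞) (fun x : E2 => ((φ x : ℝ) : ℂ)) :=
      Complex.ofRealCLM.contDiff.comp hφ
    have hΦc : HasCompactSupport (fun x : E2 => ((φ x : ℝ) : ℂ)) :=
      hφc.comp_left (g := Complex.ofReal) Complex.ofReal_zero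
    set Φ : SchwartzMap E2 ℂ := toSchwartz _ hΦs hΦc with hΦdef
    set h : SchwartzMap E2 ℂ := (FourierTransform.fourierCLE ℂ (SchwartzMap E2 ℂ)).symm Φ with hhdef
    have h𝓕h : 𝓕 (⇑h) = fun x : E2 => ((φ x : ℝ) : ℂ) := by
      have e : ⇑(FourierTransform.fourierCLE ℂ (SchwartzMap E2 ℂ) h) = 𝓕 (⇑h) := by
        rw [FourierTransform.fourierCLE_apply, SchwartzMap.fourier_coe]
      rw [← e, hhdef, (FourierTransform.fourierCLE ℂ (SchwartzMap E2 ℂ)).apply_symm_apply Φ]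
      rfl
    have key : ∀ (F : E2 → ℂ), Integrable F →
        ∫ x : E2, φ x • F x = ∫ ξ : E2, 𝓕 F ξ * h ξ := by
      intro F hF
      have e1 : (fun x : E2 => φ x • F x) = fun x : E2 => F x * 𝓕 (⇑h) x := by
        funext x
        rw [h𝓕h, Complex.real_smul, mul_comm]
      rw [e1]
      exact mulform F hF h
    rw [key f hf1, key S hS_int]
    exact integral_congr_ae (Filter.EventuallyEq.mul
      (Filter.EventuallyEq.of_eq (funext fun ξ => (h𝓕S ξ).symm)) (by rfl))
  refine main.trans ?_
  refine Filter.EventuallyEq.of_eq ?_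
  funext x
  exact (Finset.sum_congr rfl fun j _ => (Wconv j x)).symm ▸ rfl

end
end

section
/- For the operators A = M_sin (multiplication by sin φ) and B = -i∂_φ on smooth 2π-periodic functions, the von Mises wavelet Φ_λ^opt(φ) = exp(cos(φ)/λ) achieves uncertainty gap exactly 1: Var(A)·Var(B) = (1/4)|⟨[A,B]⟩|² where expectations are taken in the normalized state Φ_λ^opt/‖Φ_λ^opt‖. -/
open Real

noncomputable section

/-- The `L²(S¹)` inner product (linear in the second argument). -/
def ipS1 (f g : ℝ → ℂ) : ℂ := ∫ φ in (-π)..π, (starRingEnd ℂ) (f φ) * g φ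

/-- Multiplication by `sin φ`. -/
def Msin (f : ℝ → ℂ) : ℝ → ℂ := fun φ => (Real.sin φ : ℂ) * f φ

/-- The operator `D = -i ∂_φ`. -/
def Dop (f : ℝ → ℂ) : ℝ → ℂ := fun φ => -Complex.I * deriv f φ

/-- The (scaled) von Mises profile `Φ_λ^opt(φ) = exp(cos(φ)/λ)` as a complex function. -/
def vonMisesC (l : ℝ) : ℝ → ℂ := fun φ => (Real.exp (Real.cos φ / l) : ℂ)

/-- Expectation of an operator `X` in the normalised state `Φ_λ^opt/‖Φ_λ^opt‖`. -/
def expValC (l : ℝ) (X : (ℝ → ℂ) → (ℝ → ℂ)) : ℂ :=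
  ipS1 (vonMisesC l) (X (vonMisesC l)) / ipS1 (vonMisesC l) (vonMisesC l)

/-- Variance `⟨X²⟩ - ⟨X⟩²` of an operator `X` in the normalised von Mises state. -/
def varValC (l : ℝ) (X : (ℝ → ℂ) → (ℝ → ℂ)) : ℂ :=
  expValC l (fun f => X (X f)) - expValC l X ^ 2

-- auxiliary
def vmG (l : ℝ) (φ : ℝ) : ℝ := Real.exp (Real.cos φ / l)
def vmW (l : ℝ) (φ : ℝ) : ℝ := Real.exp (2 * Real.cos φ / l)

lemma vmG_sq (l φ : ℝ) : vmG l φ * vmG l φ = vmW l φ := by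
  unfold vmG vmW; rw [← Real.exp_add]; ring_nf

lemma contW (l : ℝ) : Continuous (vmW l) :=
  Real.continuous_exp.comp (by continuity)

lemma hasDerivAt_vmG (l φ : ℝ) :
    HasDerivAt (vmG l) (vmG l φ * (-Real.sin φ / l)) φ := by
  have h := ((Real.hasDerivAt_cos φ).div_const l).exp
  exact h

lemma hasDerivAt_vmW (l φ : ℝ) :
    HasDerivAt (vmW l) (vmW l φ * (2 * -Real.sin φ / l)) φ :=
  (((Real.hasDerivAt_cos φ).const_mul 2).div_const l).exp

lemma vonMisesC_eq (l : ℝ) : vonMisesC l = fun φ => ((vmG l φ : ℝ) : ℂ) := rfl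

lemma deriv_vonMisesC (l : ℝ) :
    deriv (vonMisesC l) = fun φ => ((vmG l φ * (-Real.sin φ / l) : ℝ) : ℂ) := by
  funext φ
  exact ((hasDerivAt_vmG l φ).ofReal_comp).deriv

lemma castInt (a b : ℝ) (f : ℝ → ℝ) :
    (∫ x in a..b, ((f x : ℝ) : ℂ)) = ((∫ x in a..b, f x : ℝ) : ℂ) :=
  RCLike.intervalIntegral_ofReal

/-- **The von Mises wavelet achieves uncertainty gap exactly 1**: for `A = M_sin` and
`B = -i∂_φ`, in the normalised state `Φ_λ^opt/‖Φ_λ^opt‖` one has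
`Var(A)·Var(B) = (1/4)|⟨[A,B]⟩|²`. -/
theorem vonMises_uncertainty_gap_one (l : ℝ) (hl : l ≠ 0) :
    varValC l Msin * varValC l Dop =
      (((1 : ℝ) / 4) : ℂ) *
        ((‖expValC l (fun f => Msin (Dop f) - Dop (Msin f))‖ : ℝ) ^ 2 : ℝ) := by
  have hππ : (-π : ℝ) < π := by linarith [Real.pi_pos]
  have hlC : (l : ℂ) ≠ 0 := by exact_mod_cast hl
  set N : ℝ := ∫ φ in (-π)..π, vmW l φ with hNdef
  set C : ℝ := ∫ φ in (-π)..π, Real.cos φ * vmW l φ with hCdef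
  set S : ℝ := ∫ φ in (-π)..π, Real.sin φ ^ 2 * vmW l φ with hSdef
  have intW : IntervalIntegrable (vmW l) MeasureTheory.volume (-π) π :=
    (contW l).intervalIntegrable _ _
  have intC : IntervalIntegrable (fun φ => Real.cos φ * vmW l φ) MeasureTheory.volume (-π) π :=
    (Real.continuous_cos.mul (contW l)).intervalIntegrable _ _
  have intS : IntervalIntegrable (fun φ => Real.sin φ ^ 2 * vmW l φ) MeasureTheory.volume (-π) π :=
    (((Real.continuous_sin.pow 2)).mul (contW l)).intervalIntegrable _ _
  have intZ : IntervalIntegrable (fun φ => Real.sin φ * vmW l φ) MeasureTheory.volume (-π) π :=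
    (Real.continuous_sin.mul (contW l)).intervalIntegrable _ _
  have hN : 0 < N :=
    intervalIntegral.intervalIntegral_pos_of_pos intW (fun x => Real.exp_pos _) hππ
  -- ∫ sin * w = 0
  have hZ : (∫ φ in (-π)..π, Real.sin φ * vmW l φ) = 0 := by
    have key : ∀ φ ∈ Set.uIcc (-π) π,
        HasDerivAt (fun φ => -(l/2) * vmW l φ) (Real.sin φ * vmW l φ) φ := by
      intro φ _
      have h := (hasDerivAt_vmW l φ).const_mul (-(l/2))
      refine h.congr_deriv ?_
      field_simp
    rw [intervalIntegral.integral_eq_sub_of_hasDerivAt key intZ]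
    simp [vmW]
  -- S = l/2 * C
  have hS : S = l / 2 * C := by
    have key : ∀ φ ∈ Set.uIcc (-π) π,
        HasDerivAt (fun φ => -(l/2) * (Real.sin φ * vmW l φ))
          (Real.sin φ ^ 2 * vmW l φ - l/2 * (Real.cos φ * vmW l φ)) φ := by
      intro φ _
      have h := ((Real.hasDerivAt_sin φ).mul (hasDerivAt_vmW l φ)).const_mul (-(l/2))
      refine h.congr_deriv ?_
      field_simp
      ring
    have hint : IntervalIntegrable
        (fun φ => Real.sin φ ^ 2 * vmW l φ - l/2 * (Real.cos φ * vmW l φ))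
        MeasureTheory.volume (-π) π := intS.sub (intC.const_mul _)
    have h2 := intervalIntegral.integral_eq_sub_of_hasDerivAt key hint
    rw [intervalIntegral.integral_sub intS (intC.const_mul _),
        intervalIntegral.integral_const_mul] at h2
    simp at h2
    linarith [h2]
  -- complex inner products
  have hconj : ∀ φ, (starRingEnd ℂ) (vonMisesC l φ) = ((vmG l φ : ℝ) : ℂ) := by
    intro φ; simp [vonMisesC_eq, Complex.conj_ofReal]
  have ip00 : ipS1 (vonMisesC l) (vonMisesC l) = (N : ℂ) := by
    unfold ipS1
    rw [hNdef, ← castInt]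
    apply intervalIntegral.integral_congr
    intro φ _
    beta_reduce
    rw [hconj, vonMisesC_eq]
    push_cast [← vmG_sq l φ]
    ring
  have ipA : ipS1 (vonMisesC l) (Msin (vonMisesC l)) = 0 := by
    unfold ipS1
    have h : (∫ φ in (-π)..π, (starRingEnd ℂ) (vonMisesC l φ) * Msin (vonMisesC l) φ)
        = ((∫ φ in (-π)..π, Real.sin φ * vmW l φ : ℝ) : ℂ) := by
      rw [← castInt]
      apply intervalIntegral.integral_congr
      intro φ _
      beta_reduce
      rw [hconj]
      unfold Msin
      rw [vonMisesC_eq]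
      push_cast [← vmG_sq l φ]
      ring
    rw [h, hZ]; simp
  have ipAA : ipS1 (vonMisesC l) (Msin (Msin (vonMisesC l))) = (S : ℂ) := by
    unfold ipS1
    rw [hSdef, ← castInt]
    apply intervalIntegral.integral_congr
    intro φ _
    beta_reduce
    rw [hconj]
    unfold Msin
    rw [vonMisesC_eq]
    push_cast [← vmG_sq l φ]
    ring
  have hDop : Dop (vonMisesC l) = fun φ => -Complex.I * ((vmG l φ * (-Real.sin φ / l) : ℝ) : ℂ) := by
    funext φ
    unfold Dop
    rw [deriv_vonMisesC]
  have ipB : ipS1 (vonMisesC l) (Dop (vonMisesC l)) = 0 := by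
    unfold ipS1
    rw [hDop]
    have h : (∫ φ in (-π)..π, (starRingEnd ℂ) (vonMisesC l φ) *
        (-Complex.I * ((vmG l φ * (-Real.sin φ / l) : ℝ) : ℂ)))
        = (Complex.I / l) * ((∫ φ in (-π)..π, Real.sin φ * vmW l φ : ℝ) : ℂ) := by
      rw [← castInt, ← intervalIntegral.integral_const_mul]
      apply intervalIntegral.integral_congr
      intro φ _
      beta_reduce
      rw [hconj]
      push_cast [← vmG_sq l φ]
      field_simp
      try ring
    rw [h, hZ]; simp
  -- Dop (Dop Φ)
  have hderiv2 : ∀ φ, deriv (fun φ => -Complex.I * ((vmG l φ * (-Real.sin φ / l) : ℝ) : ℂ)) φ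
      = -Complex.I * ((vmG l φ * (-Real.sin φ / l) * (-Real.sin φ / l)
          + vmG l φ * (-Real.cos φ / l) : ℝ) : ℂ) := by
    intro φ
    have h : HasDerivAt (fun φ => vmG l φ * (-Real.sin φ / l))
        (vmG l φ * (-Real.sin φ / l) * (-Real.sin φ / l) + vmG l φ * (-Real.cos φ / l)) φ := by
      have := (hasDerivAt_vmG l φ).mul ((Real.hasDerivAt_sin φ).neg.div_const l)
      exact this
      try ring
    exact (h.ofReal_comp.const_mul (-Complex.I)).deriv
  have hII : ∀ X : ℂ, -Complex.I * (-Complex.I * X) = -X := by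
    intro X
    rw [← mul_assoc, neg_mul_neg, Complex.I_mul_I]
    ring
  have hDD : ipS1 (vonMisesC l) (Dop (Dop (vonMisesC l)))
      = ((C / l - S / l ^ 2 : ℝ) : ℂ) := by
    unfold ipS1
    have h : (∫ φ in (-π)..π, (starRingEnd ℂ) (vonMisesC l φ) * Dop (Dop (vonMisesC l)) φ)
        = ((∫ φ in (-π)..π, (Real.cos φ / l - Real.sin φ ^ 2 / l ^ 2) * vmW l φ : ℝ) : ℂ) := by
      rw [← castInt]
      apply intervalIntegral.integral_congr
      intro φ _
      beta_reduce
      rw [hconj]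
      show ((vmG l φ : ℝ) : ℂ) * Dop (Dop (vonMisesC l)) φ = _
      unfold Dop
      simp only [deriv_vonMisesC]
      rw [hderiv2, hII]
      push_cast [← vmG_sq l φ]
      field_simp
      ring
    rw [h]
    rw [show (fun φ => (Real.cos φ / l - Real.sin φ ^ 2 / l ^ 2) * vmW l φ)
        = fun φ => (1/l) * (Real.cos φ * vmW l φ) - (1/l^2) * (Real.sin φ ^ 2 * vmW l φ) by
      funext φ; ring]
    rw [intervalIntegral.integral_sub ((intC.const_mul _)) ((intS.const_mul _)),
        intervalIntegral.integral_const_mul, intervalIntegral.integral_const_mul]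
    push_cast
    rw [← hCdef, ← hSdef]
    ring
  -- derivative of Msin Φ
  have hderivMsin : ∀ φ, deriv (fun φ => (Real.sin φ : ℂ) * vonMisesC l φ) φ
      = ((Real.cos φ : ℝ) : ℂ) * ((vmG l φ : ℝ) : ℂ)
        + ((Real.sin φ : ℝ) : ℂ) * ((vmG l φ * (-Real.sin φ / l) : ℝ) : ℂ) := by
    intro φ
    have h : HasDerivAt (fun φ => (Real.sin φ : ℂ) * ((vmG l φ : ℝ) : ℂ))
        (((Real.cos φ : ℝ) : ℂ) * ((vmG l φ : ℝ) : ℂ)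
          + ((Real.sin φ : ℝ) : ℂ) * ((vmG l φ * (-Real.sin φ / l) : ℝ) : ℂ)) φ :=
      ((Real.hasDerivAt_sin φ).ofReal_comp).mul ((hasDerivAt_vmG l φ).ofReal_comp)
    exact h.deriv
  -- commutator
  have hComm : ipS1 (vonMisesC l) ((fun f => Msin (Dop f) - Dop (Msin f)) (vonMisesC l))
      = Complex.I * (C : ℂ) := by
    unfold ipS1
    have h : (∫ φ in (-π)..π, (starRingEnd ℂ) (vonMisesC l φ) *
        ((Msin (Dop (vonMisesC l)) - Dop (Msin (vonMisesC l))) φ))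
        = Complex.I * ((∫ φ in (-π)..π, Real.cos φ * vmW l φ : ℝ) : ℂ) := by
      rw [← castInt, ← intervalIntegral.integral_const_mul]
      apply intervalIntegral.integral_congr
      intro φ _
      beta_reduce
      rw [Pi.sub_apply, hconj]
      unfold Msin Dop
      rw [deriv_vonMisesC, hderivMsin]
      push_cast [← vmG_sq l φ]
      field_simp
      ring
    rw [h, ← hCdef]
  -- put it together
  unfold varValC expValC
  rw [ip00, ipA, ipAA, ipB, hDD, hComm]
  have hNC : (N : ℂ) ≠ 0 := by exact_mod_cast hN.ne'
  rw [hS]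
  rw [norm_div, norm_mul, Complex.norm_I, Complex.norm_real, Complex.norm_real, Real.norm_eq_abs, Real.norm_eq_abs]
  rw [abs_of_pos hN]
  have habs : ((1 : ℝ) * |C| / N : ℝ) ^ 2 = C ^ 2 / N ^ 2 := by
    rw [div_pow, mul_pow, one_pow, sq_abs, one_mul]
  push_cast
  rw [show ((1:ℂ) * (|C| : ℝ) / (N:ℝ)) ^ 2 = ((C:ℂ))^2 / ((N:ℝ):ℂ)^2 by
    rw [div_pow, mul_pow, one_pow, one_mul]
    norm_cast
    rw [sq_abs]]
  have h1 : (C:ℂ)/(l:ℂ) - (l:ℂ)/2*(C:ℂ)/(l:ℂ)^2 = (C:ℂ)/(2*(l:ℂ)) := by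
    field_simp
    ring
  rw [h1]
  field_simp
  ring


end
end
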